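/- arXiv:2004.13378 — 3 statements merged into one kernel-verified Lean document; each statement's English description precedes it below -/
import Mathlib

section
/- Let r⊕ > 0 and rmin > 0 be real numbers, let rmax = √(2·r⊕·rmin + rmin²), fix r₀ with rmin ≤ r₀ ≤ rmax, and let m be a natural number. On a probability space let D₁, …, D_m be independent identically distributed real random variables with density r ↦ 2r/((2·r⊕ + rmin)² − r₀²) on (r₀, 2·r⊕ + rmin] (and 0 elsewhere). Then the probability that no D_n is at most rmax equals P(∀ n, D_n > rmax) = (1 − (rmin − (r₀² − rmin²)/(2·r⊕)) / (2·(r⊕ + rmin) − (r₀² − rmin²)/(2·r⊕)))^m. -/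
open MeasureTheory ProbabilityTheory

/-- **Corollary 1.** Probability of having zero co-channel interferers: with `m` other
co-channel satellites, each with distance distributed with the conditional density of
Lemma 3, the probability that none is within the horizon distance `rmax` is
`(1 - P_I) ^ m`. -/
theorem probability_zero_interference
    {Ω : Type*} [MeasurableSpace Ω] (P : Measure Ω) [IsProbabilityMeasure P]
    (rE rmin rmax r₀ : ℝ) (hrE : 0 < rE) (hrmin : 0 < rmin)
    (hrmax : rmax = Real.sqrt (2 * rE * rmin + rmin ^ 2))
    (hr₀l : rmin ≤ r₀) (hr₀u : r₀ ≤ rmax)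
    (m : ℕ)
    (D : Fin m → Ω → ℝ)
    (hDmeas : ∀ n, Measurable (D n))
    (hDindep : iIndepFun D P)
    (hDlaw : ∀ n, P.map (D n) =
      (volume : Measure ℝ).withDensity (fun r =>
        ENNReal.ofReal
          (if r₀ < r ∧ r ≤ 2 * rE + rmin then
            2 * r / ((2 * rE + rmin) ^ 2 - r₀ ^ 2) else 0))) :
    P {ω | ∀ n : Fin m, rmax < D n ω} =
      ENNReal.ofReal
        ((1 - (rmin - (r₀ ^ 2 - rmin ^ 2) / (2 * rE)) /
          (2 * (rE + rmin) - (r₀ ^ 2 - rmin ^ 2) / (2 * rE))) ^ m) := by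
  set L : ℝ := 2 * rE + rmin with hL
  set C : ℝ := L ^ 2 - r₀ ^ 2 with hC
  have hargnn : (0:ℝ) ≤ 2 * rE * rmin + rmin ^ 2 := by positivity
  have hrmax0 : 0 ≤ rmax := hrmax ▸ Real.sqrt_nonneg _
  have hsq : rmax ^ 2 = 2 * rE * rmin + rmin ^ 2 := by
    rw [hrmax, Real.sq_sqrt hargnn]
  have hrmaxL : rmax ≤ L := by
    have hL0 : 0 ≤ L := by positivity
    nlinarith [sq_nonneg (rmax - L), sq_nonneg (rmax + L)]
  have hr₀0 : 0 ≤ r₀ := le_trans hrmin.le hr₀l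
  have hr₀sq : r₀ ^ 2 ≤ rmax ^ 2 := by nlinarith
  have hCpos : 0 < C := by nlinarith
  -- the success probability of one satellite
  have hkey : ∀ n : Fin m, P ((D n) ⁻¹' Set.Ioi rmax)
      = ENNReal.ofReal ((L ^ 2 - rmax ^ 2) / C) := by
    intro n
    rw [← Measure.map_apply (hDmeas n) measurableSet_Ioi, hDlaw n,
      withDensity_apply _ measurableSet_Ioi]
    have hfun : ∫⁻ r in Set.Ioi rmax, ENNReal.ofReal
        (if r₀ < r ∧ r ≤ L then 2 * r / C else 0)
        = ∫⁻ r in Set.Ioi rmax,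
          Set.indicator (Set.Ioc r₀ L) (fun r => ENNReal.ofReal (2 * r / C)) r := by
      apply lintegral_congr
      intro r
      by_cases h : r₀ < r ∧ r ≤ L
      · rw [if_pos h, Set.indicator_of_mem (by exact h)]
      · rw [if_neg h, Set.indicator_of_notMem (by exact h), ENNReal.ofReal_zero]
    rw [hfun, lintegral_indicator measurableSet_Ioc _,
      Measure.restrict_restrict measurableSet_Ioc]
    have hset : Set.Ioc r₀ L ∩ Set.Ioi rmax = Set.Ioc rmax L := by
      ext x
      simp only [Set.mem_inter_iff, Set.mem_Ioc, Set.mem_Ioi]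
      constructor
      · rintro ⟨⟨_, h2⟩, h3⟩; exact ⟨h3, h2⟩
      · rintro ⟨h1, h2⟩; exact ⟨⟨lt_of_le_of_lt hr₀u h1, h2⟩, h1⟩
    rw [hset]
    have hint : IntegrableOn (fun r : ℝ => 2 * r / C) (Set.Ioc rmax L) volume := by
      apply Continuous.integrableOn_Ioc
      continuity
    rw [← ofReal_integral_eq_lintegral_ofReal hint]
    · congr 1
      rw [← intervalIntegral.integral_of_le hrmaxL]
      have : ∀ x : ℝ, 2 * x / C = (2 / C) * x := fun x => by ring
      simp_rw [this]
      rw [intervalIntegral.integral_const_mul, integral_id]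
      field_simp
    · filter_upwards [ae_restrict_mem measurableSet_Ioc] with x hx
      have : 0 < x := lt_of_le_of_lt hrmax0 hx.1
      positivity
  -- rewrite the event as an intersection and use independence
  have hevent : {ω | ∀ n : Fin m, rmax < D n ω} = ⋂ n, (D n) ⁻¹' Set.Ioi rmax := by
    ext ω; simp [Set.mem_iInter]
  rw [hevent, hDindep.meas_iInter (fun n => ⟨Set.Ioi rmax, measurableSet_Ioi, rfl⟩)]
  simp_rw [hkey]
  rw [Finset.prod_const, Finset.card_univ, Fintype.card_fin]
  have hpnn : 0 ≤ (L ^ 2 - rmax ^ 2) / C := by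
    apply div_nonneg _ hCpos.le
    nlinarith
  rw [← ENNReal.ofReal_pow hpnn]
  congr 1
  congr 1
  have hCne : C ≠ 0 := ne_of_gt hCpos
  have h2 : (2 * rE) ≠ 0 := by positivity
  have e1 : rmin - (r₀ ^ 2 - rmin ^ 2) / (2 * rE) = (rmax ^ 2 - r₀ ^ 2) / (2 * rE) := by
    rw [hsq]; field_simp; ring
  have e2 : 2 * (rE + rmin) - (r₀ ^ 2 - rmin ^ 2) / (2 * rE) = C / (2 * rE) := by
    rw [hC, hL]; field_simp; ring
  have e3 : (rmax ^ 2 - r₀ ^ 2) / (2 * rE) / (C / (2 * rE)) = (rmax ^ 2 - r₀ ^ 2) / C := by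
    field_simp
  rw [e1, e2, e3]
  rw [eq_sub_iff_add_eq, ← add_div, div_eq_one_iff_eq hCne, hC]
  ring
end

section
/- Let r⊕ > 0, rmin > 0, α > 0, p_i > 0 be real numbers, let rmax = √(2·r⊕·rmin + rmin²), fix r₀ with rmin ≤ r₀ < rmax, and let m be a natural number. On a probability space let D₁, …, D_m be i.i.d. real random variables with density r ↦ 2r/((2·r⊕ + rmin)² − r₀²) on (r₀, 2·r⊕ + rmin], and let G₁, …, G_m be i.i.d. nonnegative real random variables, independent of (D₁, …, D_m), with Laplace transform L_G(x) = E[exp(−x·G₁)]. Define the interference I = Σ_{n=1}^m 1{D_n ≤ rmax}·p_i·G_n·D_n^{−α}. Then for every s ≥ 0, E[exp(−s·I)] = Σ_{k=0}^{m} C(m, k)·(1 − P_I)^{m−k}·(∫_{r₀}^{rmax} L_G(s·p_i·r^{−α})·(2r/((2·r⊕ + rmin)² − r₀²)) dr)^k, where P_I = (rmax² − r₀²)/((2·r⊕ + rmin)² − r₀²). -/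
open MeasureTheory ProbabilityTheory
open scoped NNReal ENNReal

theorem integral_pi_prod_real : ∀ {n : ℕ} (μ : Fin n → Measure ℝ),
    (∀ i, IsProbabilityMeasure (μ i)) → ∀ f : Fin n → ℝ → ℝ,
    ∫ x : Fin n → ℝ, ∏ i, f i (x i) ∂Measure.pi μ = ∏ i, ∫ x, f i x ∂μ i := by
  intro n
  induction n with
  | zero =>
    intro μ hμ f
    haveI := hμ
    rw [Measure.pi_of_empty μ]
    simp
  | succ n ih =>
    intro μ hμ f
    haveI := hμ
    rw [← ((measurePreserving_piFinSuccAbove μ 0).symm).integral_comp']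
    simp_rw [MeasurableEquiv.piFinSuccAbove_symm_apply, Fin.insertNthEquiv,
      Fin.prod_univ_succ, Fin.insertNth_zero, Equiv.coe_fn_mk, Fin.cons_succ,
      Fin.zero_succAbove, Fin.cons_zero, cast_eq]
    rw [← ih (fun j => μ j.succ) (fun j => hμ _) (fun j => f j.succ), ← integral_prod_mul]

theorem map_fun_eq_pi {Ω : Type*} [MeasurableSpace Ω] {P : Measure Ω}
    [IsProbabilityMeasure P] {m : ℕ} {X : Fin m → Ω → ℝ}
    (hmeas : ∀ n, Measurable (X n))
    (hind : iIndepFun X P) :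
    P.map (fun ω n => X n ω) = Measure.pi (fun n => P.map (X n)) := by
  haveI : ∀ n, IsProbabilityMeasure (P.map (X n)) :=
    fun n => Measure.isProbabilityMeasure_map (hmeas n).aemeasurable
  refine (Measure.pi_eq fun s hs => ?_).symm
  rw [Measure.map_apply (measurable_pi_lambda _ hmeas) (MeasurableSet.univ_pi hs)]
  have hpre : (fun ω n => X n ω) ⁻¹' Set.pi Set.univ s = ⋂ n ∈ Finset.univ, X n ⁻¹' s n := by
    ext ω; simp [Set.mem_pi]
  rw [hpre, (iIndepFun_iff_measure_inter_preimage_eq_mul.mp hind) Finset.univ (fun n _ => hs n)]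
  exact Finset.prod_congr rfl fun n _ => (Measure.map_apply (hmeas n) (hs n)).symm

set_option maxHeartbeats 1000000 in
/-- **Lemma 5.** Laplace transform of the cumulative co-channel interference power at the
user, conditioned on the serving distance `r₀`, for general i.i.d. fading gains on the
interfering links. -/
theorem laplace_transform_interference_general_fading
    {Ω : Type*} [MeasurableSpace Ω] (P : Measure Ω) [IsProbabilityMeasure P]
    (rE rmin rmax r₀ α pi : ℝ) (hrE : 0 < rE) (hrmin : 0 < rmin)
    (hα : 0 < α) (hpi : 0 < pi)
    (hrmax : rmax = Real.sqrt (2 * rE * rmin + rmin ^ 2))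
    (hr₀l : rmin ≤ r₀) (hr₀u : r₀ < rmax)
    (m : ℕ)
    (D : Fin m → Ω → ℝ) (G : Fin m → Ω → ℝ)
    (hDmeas : ∀ n, Measurable (D n)) (hGmeas : ∀ n, Measurable (G n))
    (hDindep : iIndepFun D P)
    (hGindep : iIndepFun G P)
    (hDGindep : IndepFun (fun ω => fun n => D n ω) (fun ω => fun n => G n ω) P)
    (hDlaw : ∀ n, P.map (D n) =
      (volume : Measure ℝ).withDensity (fun r =>
        ENNReal.ofReal
          (if r₀ < r ∧ r ≤ 2 * rE + rmin then
            2 * r / ((2 * rE + rmin) ^ 2 - r₀ ^ 2) else 0)))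
    (ν : Measure ℝ) [IsProbabilityMeasure ν]
    (hν : ν {g | g < 0} = 0)
    (hGlaw : ∀ n, P.map (G n) = ν)
    (LG : ℝ → ℝ) (hLG : ∀ x, LG x = ∫ g, Real.exp (-(x * g)) ∂ν)
    (I : Ω → ℝ)
    (hI : ∀ ω, I ω = ∑ n : Fin m,
      if D n ω ≤ rmax then pi * G n ω * (D n ω) ^ (-α) else 0)
    (PI : ℝ) (hPI : PI = (rmax ^ 2 - r₀ ^ 2) / ((2 * rE + rmin) ^ 2 - r₀ ^ 2)) :
    ∀ s : ℝ, 0 ≤ s →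
      ∫ ω, Real.exp (-(s * I ω)) ∂P =
        ∑ k ∈ Finset.range (m + 1),
          (m.choose k : ℝ) * (1 - PI) ^ (m - k) *
            (∫ r in r₀..rmax,
              LG (s * pi * r ^ (-α)) * (2 * r / ((2 * rE + rmin) ^ 2 - r₀ ^ 2))) ^ k := by
  intro s hs
  set b := 2 * rE + rmin with hbdef
  set c2 := b ^ 2 - r₀ ^ 2 with hc2def
  -- basic numeric facts
  have hr₀pos : 0 < r₀ := lt_of_lt_of_le hrmin hr₀l
  have hb0 : 0 < b := by rw [hbdef]; positivity
  have hrmaxpos : 0 < rmax := lt_trans hr₀pos hr₀u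
  have hrmax2 : rmax ^ 2 = rmin * b := by
    rw [hrmax, Real.sq_sqrt (by positivity), hbdef]; ring
  have hrminb : rmin < b := by rw [hbdef]; linarith
  have hrmaxb : rmax < b := by nlinarith [hrmax2, hrmaxpos, hrmin, hb0, hrminb]
  have hr₀b : r₀ < b := lt_trans hr₀u hrmaxb
  have hc2pos : 0 < c2 := by rw [hc2def]; nlinarith [hr₀pos, hr₀b]
  -- the law of each D n
  set μ := (volume : Measure ℝ).withDensity
      (fun r => ENNReal.ofReal (if r₀ < r ∧ r ≤ b then 2 * r / c2 else 0)) with hμdef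
  have hDlaw' : ∀ n, P.map (D n) = μ := fun n => hDlaw n
  -- density facts
  have hdens_nn : ∀ r : ℝ, 0 ≤ (if r₀ < r ∧ r ≤ b then 2 * r / c2 else 0) := by
    intro r
    split_ifs with h
    · have hr : 0 < r := lt_trans hr₀pos h.1
      positivity
    · exact le_refl _
  have hdens_meas : Measurable fun r : ℝ => (if r₀ < r ∧ r ≤ b then 2 * r / c2 else 0) := by
    have hset : MeasurableSet {r : ℝ | r₀ < r ∧ r ≤ b} := by
      have : {r : ℝ | r₀ < r ∧ r ≤ b} = Set.Ioc r₀ b := rfl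
      rw [this]; exact measurableSet_Ioc
    exact Measurable.ite hset ((measurable_const.mul measurable_id).div_const c2)
      measurable_const
  have hdens_ind : (fun r : ℝ => if r₀ < r ∧ r ≤ b then 2 * r / c2 else 0)
      = (Set.Ioc r₀ b).indicator (fun r => 2 * r / c2) := by
    funext r; simp [Set.indicator_apply, Set.mem_Ioc]
  have hcont : Continuous fun r : ℝ => 2 * r / c2 := by continuity
  have hIoc : ∀ u v : ℝ, u ≤ v →
      ∫ r in Set.Ioc u v, 2 * r / c2 = (v ^ 2 - u ^ 2) / c2 := by
    intro u v huv
    rw [← intervalIntegral.integral_of_le huv]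
    have hcongr : ∀ r : ℝ, 2 * r / c2 = r * (2 / c2) := fun r => by ring
    simp_rw [hcongr]
    rw [intervalIntegral.integral_mul_const, integral_id]
    field_simp
  have hdens_int : Integrable (fun r : ℝ => if r₀ < r ∧ r ≤ b then 2 * r / c2 else 0) := by
    rw [hdens_ind]
    exact (hcont.integrableOn_Ioc).integrable_indicator measurableSet_Ioc
  haveI hμprob : IsProbabilityMeasure μ := by
    constructor
    rw [hμdef, withDensity_apply _ MeasurableSet.univ, Measure.restrict_univ,
      ← ofReal_integral_eq_lintegral_ofReal hdens_int (Filter.Eventually.of_forall hdens_nn),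
      hdens_ind, integral_indicator measurableSet_Ioc, hIoc r₀ b hr₀b.le, ← hc2def,
      div_self (ne_of_gt hc2pos)]
    exact ENNReal.ofReal_one
  -- the one-dimensional integrand
  obtain ⟨hker, hkerdef⟩ : ∃ f : ℝ → ℝ → ℝ, f = fun d g =>
      Real.exp (-(s * (if 0 < d ∧ d ≤ rmax then pi * max g 0 * d ^ (-α) else 0))) := ⟨_, rfl⟩
  have ht_nn : ∀ d g : ℝ,
      0 ≤ (if 0 < d ∧ d ≤ rmax then pi * max g 0 * d ^ (-α) else 0) := by
    intro d g; split_ifs with hdg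
    · have h1 : (0:ℝ) < d ^ (-α) := Real.rpow_pos_of_pos hdg.1 _
      have h2 : (0:ℝ) ≤ max g 0 := le_max_right _ _
      positivity
    · exact le_refl _
  have hker_pos : ∀ d g, 0 < hker d g := by
    intro d g; rw [hkerdef]; exact Real.exp_pos _
  have hker_le_one : ∀ d g, hker d g ≤ 1 := by
    intro d g
    simp only [hkerdef]
    have hx : -(s * (if 0 < d ∧ d ≤ rmax then pi * max g 0 * d ^ (-α) else 0)) ≤ 0 :=
      neg_nonpos.mpr (mul_nonneg hs (ht_nn d g))
    calc Real.exp _ ≤ Real.exp 0 := Real.exp_le_exp.mpr hx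
    _ = 1 := Real.exp_zero
  have hker_meas : Measurable fun p : ℝ × ℝ => hker p.1 p.2 := by
    simp only [hkerdef]
    apply Real.measurable_exp.comp
    apply Measurable.neg
    apply Measurable.const_mul
    have hset : MeasurableSet {p : ℝ × ℝ | 0 < p.1 ∧ p.1 ≤ rmax} := by
      have : {p : ℝ × ℝ | 0 < p.1 ∧ p.1 ≤ rmax} = Prod.fst ⁻¹' Set.Ioc 0 rmax := rfl
      rw [this]; exact measurable_fst measurableSet_Ioc
    exact Measurable.ite hset
      ((measurable_const.mul (measurable_snd.max measurable_const)).mul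
        (measurable_fst.pow measurable_const)) measurable_const
  obtain ⟨H, hHdef⟩ : ∃ f : ℝ → ℝ, f = fun d => ∫ g, hker d g ∂ν := ⟨_, rfl⟩
  have hH_meas : Measurable H := by
    rw [hHdef]
    exact (hker_meas.stronglyMeasurable.integral_prod_right').measurable
  have hH_abs : ∀ d, |H d| ≤ 1 := by
    intro d
    rw [hHdef]
    have hb := norm_integral_le_of_norm_le_const (μ := ν) (C := 1)
      (f := fun g => hker d g)
      (Filter.Eventually.of_forall fun g => by
        rw [Real.norm_eq_abs, abs_of_pos (hker_pos d g)]; exact hker_le_one d g)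
    rw [Real.norm_eq_abs] at hb
    simpa using hb
  have hH_one : ∀ d, rmax < d → H d = 1 := by
    intro d hd
    have hone : ∀ g, hker d g = 1 := by
      intro g; simp only [hkerdef]
      rw [if_neg (fun hc => absurd hc.2 (not_le.mpr hd))]
      simp
    simp only [hHdef]
    simp_rw [hone]
    simp
  have hg0ae : ∀ᵐ g ∂ν, 0 ≤ g := by
    have hseteq : {a : ℝ | ¬ 0 ≤ a} = {g : ℝ | g < 0} := by ext g; simp [not_le]
    rw [ae_iff, hseteq]; exact hν
  have hH_LG : ∀ d, r₀ < d → d ≤ rmax → H d = LG (s * pi * d ^ (-α)) := by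
    intro d h1 h2
    have hd0 : 0 < d := lt_trans hr₀pos h1
    rw [hLG]
    simp only [hHdef]
    refine integral_congr_ae ?_
    filter_upwards [hg0ae] with g hg
    simp only [hkerdef]
    rw [if_pos ⟨hd0, h2⟩, max_eq_left hg]
    congr 1
    ring
  -- vector-level measure identities
  have hDvec : Measurable fun ω => fun n => D n ω := measurable_pi_lambda _ hDmeas
  have hGvec : Measurable fun ω => fun n => G n ω := measurable_pi_lambda _ hGmeas
  have hmapD : P.map (fun ω n => D n ω) = Measure.pi fun _ : Fin m => μ := by
    rw [map_fun_eq_pi hDmeas hDindep]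
    congr 1
    funext n
    exact hDlaw' n
  have hmapG : P.map (fun ω n => G n ω) = Measure.pi fun _ : Fin m => ν := by
    rw [map_fun_eq_pi hGmeas hGindep]
    congr 1
    funext n
    exact hGlaw n
  have hmapPair : P.map (fun ω => ((fun n => D n ω), (fun n => G n ω)))
      = (Measure.pi fun _ : Fin m => μ).prod (Measure.pi fun _ : Fin m => ν) := by
    rw [← hmapD, ← hmapG]
    exact (indepFun_iff_map_prod_eq_prod_map_map hDvec.aemeasurable hGvec.aemeasurable).mp
      hDGindep
  -- a.e. positivity facts
  have hDae : ∀ n, ∀ᵐ ω ∂P, r₀ < D n ω := by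
    intro n
    rw [ae_iff]
    have hset : {ω | ¬ r₀ < D n ω} = D n ⁻¹' Set.Iic r₀ := by
      ext ω; simp [not_lt, Set.mem_Iic]
    have hρind : (fun r : ℝ => ENNReal.ofReal (if r₀ < r ∧ r ≤ b then 2 * r / c2 else 0))
        = fun r => (Set.Ioc r₀ b).indicator (fun r => ENNReal.ofReal (2 * r / c2)) r := by
      funext r
      simp [Set.indicator_apply, Set.mem_Ioc, apply_ite ENNReal.ofReal]
    rw [hset, ← Measure.map_apply (hDmeas n) measurableSet_Iic, hDlaw' n, hμdef, hρind,
      withDensity_apply _ measurableSet_Iic, lintegral_indicator measurableSet_Ioc,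
      Measure.restrict_restrict measurableSet_Ioc]
    have hempty : Set.Ioc r₀ b ∩ Set.Iic r₀ = ∅ := by
      ext r; simp only [Set.mem_inter_iff, Set.mem_Ioc, Set.mem_Iic, Set.mem_empty_iff_false,
        iff_false]
      rintro ⟨⟨h1, _⟩, h2⟩
      exact absurd h2 (not_le.mpr h1)
    rw [hempty, Measure.restrict_empty, lintegral_zero_measure]
  have hGae : ∀ n, ∀ᵐ ω ∂P, 0 ≤ G n ω := by
    intro n
    rw [ae_iff]
    have hset : {ω | ¬ 0 ≤ G n ω} = G n ⁻¹' {g : ℝ | g < 0} := by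
      ext ω; simp [not_le]
    have hms : MeasurableSet {g : ℝ | g < 0} := measurableSet_Iio
    rw [hset, ← Measure.map_apply (hGmeas n) hms, hGlaw n]
    exact hν
  -- a.e. rewriting of the integrand as a product
  have hprod_ae : ∀ᵐ ω ∂P,
      Real.exp (-(s * I ω)) = ∏ n : Fin m, hker (D n ω) (G n ω) := by
    filter_upwards [ae_all_iff.mpr hDae, ae_all_iff.mpr hGae] with ω hDω hGω
    rw [hI ω, Finset.mul_sum, ← Finset.sum_neg_distrib, Real.exp_sum]
    refine Finset.prod_congr rfl fun n _ => ?_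
    simp only [hkerdef]
    congr 2
    by_cases hc : D n ω ≤ rmax
    · rw [if_pos hc, if_pos ⟨lt_trans hr₀pos (hDω n), hc⟩, max_eq_left (hGω n)]
    · rw [if_neg hc, if_neg (fun hx => hc hx.2)]
  -- the product function on the product space
  obtain ⟨F, hFdef⟩ : ∃ f : (Fin m → ℝ) × (Fin m → ℝ) → ℝ,
      f = fun p => ∏ n : Fin m, hker (p.1 n) (p.2 n) := ⟨_, rfl⟩
  have hF_meas : Measurable F := by
    simp only [hFdef]
    apply Finset.measurable_prod
    intro n _
    have h1 : Measurable fun p : (Fin m → ℝ) × (Fin m → ℝ) => ((p.1 n, p.2 n) : ℝ × ℝ) :=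
      Measurable.prodMk (measurable_fst.eval) (measurable_snd.eval)
    exact hker_meas.comp h1
  have hF_bound : ∀ p, ‖F p‖ ≤ 1 := by
    intro p
    simp only [hFdef]
    rw [Real.norm_eq_abs,
      abs_of_nonneg (Finset.prod_nonneg fun n _ => (hker_pos _ _).le)]
    exact Finset.prod_le_one (fun n _ => (hker_pos _ _).le) (fun n _ => hker_le_one _ _)
  have hF_int : Integrable F ((Measure.pi fun _ : Fin m => μ).prod
      (Measure.pi fun _ : Fin m => ν)) :=
    Integrable.mono' (integrable_const 1) hF_meas.aestronglyMeasurable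
      (Filter.Eventually.of_forall hF_bound)
  have hprod_aeF : ∀ᵐ ω ∂P,
      Real.exp (-(s * I ω)) = F ((fun n => D n ω), (fun n => G n ω)) := by
    filter_upwards [hprod_ae] with ω hω
    rw [hFdef]
    exact hω
  -- integrability pieces for the density computation
  have hIntOn : ∀ u v : ℝ, 0 ≤ u →
      IntegrableOn (fun x => 2 * x / c2 * H x) (Set.Ioc u v) := by
    intro u v hu
    have hmeas2 : Measurable fun x : ℝ => 2 * x / c2 * H x :=
      ((measurable_const.mul measurable_id).div_const c2).mul hH_meas
    refine Integrable.mono' (g := fun _ => 2 * v / c2)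
      (integrableOn_const measure_Ioc_lt_top.ne)
      hmeas2.aestronglyMeasurable.restrict ?_
    rw [ae_restrict_iff' measurableSet_Ioc]
    refine Filter.Eventually.of_forall fun x hx => ?_
    have hx0 : 0 < x := lt_of_le_of_lt hu hx.1
    have hxv : x ≤ v := hx.2
    have h1 : 2 * x / c2 ≤ 2 * v / c2 := by gcongr
    have h2 : (0:ℝ) ≤ 2 * x / c2 := by positivity
    rw [Real.norm_eq_abs, abs_mul, abs_of_nonneg h2]
    calc 2 * x / c2 * |H x| ≤ 2 * v / c2 * 1 :=
          mul_le_mul h1 (hH_abs x) (abs_nonneg _) (by linarith)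
    _ = 2 * v / c2 := mul_one _
  -- the value of the one-dimensional integral
  have hμint : ∫ x, H x ∂μ
      = ∫ x, (if r₀ < x ∧ x ≤ b then 2 * x / c2 else 0) * H x := by
    rw [hμdef]
    have hcoe : (fun r : ℝ => ENNReal.ofReal (if r₀ < r ∧ r ≤ b then 2 * r / c2 else 0))
        = fun r => ((Real.toNNReal (if r₀ < r ∧ r ≤ b then 2 * r / c2 else 0) : ℝ≥0) : ℝ≥0∞) :=
      rfl
    rw [hcoe, integral_withDensity_eq_integral_smul hdens_meas.real_toNNReal H]
    refine integral_congr_ae (Filter.Eventually.of_forall fun x => ?_)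
    show (Real.toNNReal (if r₀ < x ∧ x ≤ b then 2 * x / c2 else 0)) • H x = _
    rw [NNReal.smul_def, smul_eq_mul, Real.coe_toNNReal _ (hdens_nn x)]
  have hsplit : ∫ x, (if r₀ < x ∧ x ≤ b then 2 * x / c2 else 0) * H x
      = (∫ x in Set.Ioc r₀ rmax, 2 * x / c2 * H x)
        + ∫ x in Set.Ioc rmax b, 2 * x / c2 * H x := by
    have hindm : (fun x : ℝ => (if r₀ < x ∧ x ≤ b then 2 * x / c2 else 0) * H x)
        = (Set.Ioc r₀ b).indicator fun x => 2 * x / c2 * H x := by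
      funext x
      simp only [Set.indicator_apply, Set.mem_Ioc]
      split_ifs <;> simp
    rw [hindm, integral_indicator measurableSet_Ioc,
      ← Set.Ioc_union_Ioc_eq_Ioc hr₀u.le hrmaxb.le,
      setIntegral_union (Set.Ioc_disjoint_Ioc_of_le le_rfl) measurableSet_Ioc
        (hIntOn r₀ rmax hr₀pos.le) (hIntOn rmax b hrmaxpos.le)]
  have hpiece2 : ∫ x in Set.Ioc rmax b, 2 * x / c2 * H x = 1 - PI := by
    have heq : ∀ x ∈ Set.Ioc rmax b, 2 * x / c2 * H x = 2 * x / c2 := fun x hx => by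
      rw [hH_one x hx.1, mul_one]
    rw [setIntegral_congr_fun measurableSet_Ioc heq, hIoc rmax b hrmaxb.le, hPI, hc2def]
    have hne : b ^ 2 - r₀ ^ 2 ≠ 0 := by nlinarith [hr₀pos, hr₀b]
    field_simp
    ring
  have hpiece1 : ∫ x in Set.Ioc r₀ rmax, 2 * x / c2 * H x
      = ∫ r in r₀..rmax, LG (s * pi * r ^ (-α)) * (2 * r / c2) := by
    rw [intervalIntegral.integral_of_le hr₀u.le]
    refine setIntegral_congr_fun measurableSet_Ioc fun x hx => ?_
    rw [hH_LG x hx.1 hx.2, mul_comm]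
  have hc_val : ∫ x, H x ∂μ
      = (∫ r in r₀..rmax, LG (s * pi * r ^ (-α)) * (2 * r / c2)) + (1 - PI) := by
    rw [hμint, hsplit, hpiece1, hpiece2]
  -- the main computation
  calc ∫ ω, Real.exp (-(s * I ω)) ∂P
      = ∫ ω, F ((fun n => D n ω), (fun n => G n ω)) ∂P := integral_congr_ae hprod_aeF
    _ = ∫ p, F p ∂((Measure.pi fun _ : Fin m => μ).prod (Measure.pi fun _ : Fin m => ν)) := by
        rw [← hmapPair, integral_map (hDvec.prodMk hGvec).aemeasurable
          hF_meas.aestronglyMeasurable]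
    _ = ∫ d : Fin m → ℝ, ∫ g : Fin m → ℝ, F (d, g) ∂(Measure.pi fun _ : Fin m => ν)
          ∂(Measure.pi fun _ : Fin m => μ) := integral_prod F hF_int
    _ = ∫ d : Fin m → ℝ, ∏ n : Fin m, H (d n) ∂(Measure.pi fun _ : Fin m => μ) := by
        refine integral_congr_ae (Filter.Eventually.of_forall fun d => ?_)
        rw [hFdef, hHdef]
        exact integral_pi_prod_real (fun _ : Fin m => ν) (fun _ => inferInstance)
          (fun n g => hker (d n) g)
    _ = ∏ _n : Fin m, ∫ x, H x ∂μ :=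
        integral_pi_prod_real _ (fun _ => inferInstance) (fun _ => H)
    _ = (∫ x, H x ∂μ) ^ m := by rw [Finset.prod_const, Finset.card_univ, Fintype.card_fin]
    _ = ((∫ r in r₀..rmax, LG (s * pi * r ^ (-α)) * (2 * r / c2)) + (1 - PI)) ^ m := by
        rw [hc_val]
    _ = ∑ k ∈ Finset.range (m + 1),
          (m.choose k : ℝ) * (1 - PI) ^ (m - k) *
            (∫ r in r₀..rmax, LG (s * pi * r ^ (-α)) * (2 * r / c2)) ^ k := by
        rw [add_pow]
        exact Finset.sum_congr rfl fun k hk => by ring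
end

section
/- Let r⊕ > 0, rmin > 0, p_i > 0 be real numbers, let rmax = √(2·r⊕·rmin + rmin²), fix r₀ with rmin ≤ r₀ < rmax, and let m be a natural number. On a probability space let D₁, …, D_m be i.i.d. real random variables with density r ↦ 2r/((2·r⊕ + rmin)² − r₀²) on (r₀, 2·r⊕ + rmin], and let G₁, …, G_m be i.i.d. exponential random variables with rate 1, independent of (D₁, …, D_m). Define I = Σ_{n=1}^m 1{D_n ≤ rmax}·p_i·G_n·D_n^{−2}. Then for every s > 0, E[exp(−s·I)] = Σ_{k=0}^{m} C(m, k)·(1 − P_I)^{m−k}·(P_I·((p_i·s/(rmax² − r₀²))·ln((p_i·s + r₀²)/(p_i·s + rmax²)) + 1))^k, where P_I = (rmax² − r₀²)/((2·r⊕ + rmin)² − r₀²). -/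
open MeasureTheory ProbabilityTheory Real Set
open scoped ENNReal NNReal

lemma aux_map_pi {Ω : Type*} [MeasurableSpace Ω] (P : Measure Ω) [IsProbabilityMeasure P]
    {m : ℕ} (X : Fin m → Ω → ℝ) (hmeas : ∀ n, Measurable (X n))
    (hind : iIndepFun X P) :
    P.map (fun ω n => X n ω) = Measure.pi (fun n => P.map (X n)) := by
  haveI : ∀ n, IsProbabilityMeasure (P.map (X n)) :=
    fun n => Measure.isProbabilityMeasure_map (hmeas n).aemeasurable
  refine (Measure.pi_eq (μ := fun n => P.map (X n)) fun s hs => ?_).symm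
  rw [Measure.map_apply (measurable_pi_lambda _ hmeas) (MeasurableSet.univ_pi hs)]
  have hpre : (fun ω n => X n ω) ⁻¹' (Set.univ.pi s) = ⋂ n, X n ⁻¹' s n := by
    ext ω; simp [Set.mem_pi]
  rw [hpre, hind.meas_iInter fun n => ⟨s n, hs n, rfl⟩]
  exact Finset.prod_congr rfl fun n _ =>
    (Measure.map_apply (hmeas n) (hs n)).symm

lemma aux_integral_pi_prod {m : ℕ} (μ : Measure ℝ) [IsProbabilityMeasure μ]
    (f : Fin m → ℝ → ℝ) :
    ∫ x : Fin m → ℝ, ∏ n, f n (x n) ∂Measure.pi (fun _ => μ) = ∏ n, ∫ x, f n x ∂μ := by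
  letI : MeasureSpace ℝ := ⟨μ⟩
  exact MeasureTheory.integral_fintype_prod_eq_prod (E := fun _ => ℝ) f

lemma aux_exp_integral {c : ℝ} (hc : 0 ≤ c) :
    ∫ y, Real.exp (-(c * max y 0)) ∂(expMeasure 1) = 1 / (1 + c) := by
  have h1c : (0:ℝ) < 1 + c := by linarith
  have hexp : expMeasure 1 = volume.withDensity (exponentialPDF 1) := rfl
  have hd : exponentialPDF 1 = fun x => (((if 0 ≤ x then Real.exp (-x) else 0).toNNReal : ℝ≥0) : ℝ≥0∞) := by
    funext x
    rw [exponentialPDF_eq, ENNReal.ofReal]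
    congr 1
    split_ifs <;> simp
  have hmeas : Measurable fun x => (if 0 ≤ x then Real.exp (-x) else 0).toNNReal := by
    apply Measurable.real_toNNReal
    exact Measurable.ite measurableSet_Ici (by fun_prop) measurable_const
  rw [hexp, hd, integral_withDensity_eq_integral_smul hmeas]
  have heq : ∀ x : ℝ, ((if 0 ≤ x then Real.exp (-x) else 0).toNNReal : ℝ≥0)
      • Real.exp (-(c * max x 0))
      = (Ici (0:ℝ)).indicator (fun x => Real.exp (-((1+c) * x))) x := by
    intro x
    simp only [indicator, mem_Ici, NNReal.smul_def]
    split_ifs with h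
    · rw [Real.coe_toNNReal _ (Real.exp_nonneg _), max_eq_left h, smul_eq_mul, ← Real.exp_add]
      ring_nf
    · simp
  simp_rw [heq]
  rw [integral_indicator measurableSet_Ici, integral_Ici_eq_integral_Ioi]
  have := integral_comp_mul_left_Ioi (fun x => Real.exp (-x)) 0 h1c
  simp only [mul_zero, smul_eq_mul] at this
  rw [this, integral_exp_neg_Ioi_zero, mul_one, one_div]

lemma aux_D_integral {r₀ rmax R a : ℝ} (h0 : 0 < r₀) (h1 : r₀ < rmax) (h2 : rmax ≤ R)
    (ha : 0 < a) :
    ∫ x, (if x ≤ rmax then 1/(1 + a * (max x r₀)^(-2:ℝ)) else 1)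
      ∂(volume.withDensity (fun r => ENNReal.ofReal (if r₀ < r ∧ r ≤ R then 2*r/(R^2 - r₀^2) else 0)))
    = 1 - a / (R^2 - r₀^2) * Real.log ((a + rmax^2)/(a + r₀^2)) := by
  set K : ℝ := R^2 - r₀^2 with hK
  have hrR : r₀ < R := lt_of_lt_of_le h1 h2
  have hKpos : 0 < K := by
    have : r₀^2 < R^2 := by nlinarith
    simpa [hK] using sub_pos.mpr this
  set ρ : ℝ → ℝ := fun r => if r₀ < r ∧ r ≤ R then 2*r/K else 0 with hρ
  have hρmeas : Measurable ρ := by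
    apply Measurable.ite _ (by fun_prop) measurable_const
    exact (measurableSet_Ioi.inter measurableSet_Iic : MeasurableSet {r : ℝ | r₀ < r ∧ r ≤ R})
  set h : ℝ → ℝ := fun x => if x ≤ rmax then 1/(1 + a * (max x r₀)^(-2:ℝ)) else 1 with hh
  -- step 1: withDensity to density-weighted integral
  have hd : (fun r => ENNReal.ofReal (ρ r)) = fun r => ((ρ r).toNNReal : ℝ≥0∞) := rfl
  rw [hd, integral_withDensity_eq_integral_smul (hρmeas.real_toNNReal) h]
  have hρnn : ∀ x, 0 ≤ ρ x := by
    intro x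
    simp only [hρ]
    split_ifs with hx
    · exact div_nonneg (by nlinarith [hx.1]) hKpos.le
    · exact le_rfl
  have heq : ∀ x : ℝ, ((ρ x).toNNReal : ℝ≥0) • h x
      = (Ioc r₀ R).indicator (fun x => if x ≤ rmax then 2*x/K * (x^2/(x^2+a)) else 2*x/K) x := by
    intro x
    rw [NNReal.smul_def, Real.coe_toNNReal _ (hρnn x)]; simp only [indicator, mem_Ioc, hρ, hh]
    by_cases hx : r₀ < x ∧ x ≤ R
    · have hxpos : 0 < x := lt_trans h0 hx.1
      rw [if_pos hx, if_pos hx]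
      by_cases hxm : x ≤ rmax
      · rw [if_pos hxm, if_pos hxm, max_eq_left hx.1.le]
        have hx2 : (0:ℝ) < x^2 + a := by positivity
        rw [Real.rpow_neg hxpos.le, Real.rpow_two]
        rw [smul_eq_mul]
        field_simp
      · rw [if_neg hxm, if_neg hxm, smul_eq_mul, mul_one]
    · rw [if_neg hx, if_neg hx, zero_smul]
  simp_rw [heq]
  rw [integral_indicator measurableSet_Ioc]
  set f1 : ℝ → ℝ := fun x => 2*x/K * (x^2/(x^2+a)) with hf1
  set f2 : ℝ → ℝ := fun x => 2*x/K with hf2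
  have hc1 : Continuous f1 := by
    apply Continuous.mul (by fun_prop)
    apply Continuous.div (by fun_prop) (by fun_prop)
    intro x; positivity
  have hc2 : Continuous f2 := by fun_prop
  have hsplit : Ioc r₀ R = Ioc r₀ rmax ∪ Ioc rmax R := (Set.Ioc_union_Ioc_eq_Ioc h1.le h2).symm
  have heq1 : Set.EqOn (fun x => if x ≤ rmax then 2*x/K * (x^2/(x^2+a)) else 2*x/K) f1 (Ioc r₀ rmax) :=
    fun x hx => if_pos hx.2
  have heq2 : Set.EqOn (fun x => if x ≤ rmax then 2*x/K * (x^2/(x^2+a)) else 2*x/K) f2 (Ioc rmax R) :=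
    fun x hx => if_neg (not_le.mpr hx.1)
  rw [hsplit, setIntegral_union (Set.Ioc_disjoint_Ioc_of_le le_rfl) measurableSet_Ioc
      ((hc1.integrableOn_Ioc).congr_fun heq1.symm measurableSet_Ioc)
      ((hc2.integrableOn_Ioc).congr_fun heq2.symm measurableSet_Ioc),
    setIntegral_congr_fun measurableSet_Ioc heq1, setIntegral_congr_fun measurableSet_Ioc heq2,
    ← intervalIntegral.integral_of_le h1.le, ← intervalIntegral.integral_of_le h2]
  have hI1 : ∫ x in r₀..rmax, f1 x = ((rmax^2 - a * Real.log (rmax^2 + a))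
      - (r₀^2 - a * Real.log (r₀^2 + a)))/K := by
    have hder : ∀ x : ℝ, x ∈ Set.uIcc r₀ rmax →
        HasDerivAt (fun x : ℝ => (x^2 - a * Real.log (x^2 + a))/K) (f1 x) x := by
      intro x _
      have hx2 : (0:ℝ) < x^2 + a := by positivity
      have hd : HasDerivAt (fun x : ℝ => (x^2 - a * Real.log (x^2 + a))/K)
          ((2*x - a * ((2*x)/(x^2+a)))/K) x := by
        have h1' : HasDerivAt (fun x : ℝ => x^2) (2*x) x := by
          simpa using hasDerivAt_pow 2 x
        have h2' : HasDerivAt (fun x : ℝ => Real.log (x^2 + a)) ((2*x)/(x^2+a)) x :=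
          (h1'.add_const a).log hx2.ne'
        exact (h1'.sub (h2'.const_mul a)).div_const K
      convert hd using 1
      simp only [hf1]
      field_simp
      ring
    have key := intervalIntegral.integral_eq_sub_of_hasDerivAt hder (hc1.intervalIntegrable _ _)
    rw [key]
    ring
  have hI2 : ∫ x in rmax..R, f2 x = R^2/K - rmax^2/K := by
    have hder : ∀ x : ℝ, x ∈ Set.uIcc rmax R →
        HasDerivAt (fun x : ℝ => x^2/K) (f2 x) x := by
      intro x _
      have h1' : HasDerivAt (fun x : ℝ => x^2) (2*x) x := by simpa using hasDerivAt_pow 2 x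
      exact (h1'.div_const K)
    have key := intervalIntegral.integral_eq_sub_of_hasDerivAt hder (hc2.intervalIntegrable _ _)
    rw [key]
  rw [hI1, hI2]
  have hl : Real.log ((a + rmax^2)/(a + r₀^2)) = Real.log (rmax^2 + a) - Real.log (r₀^2 + a) := by
    rw [Real.log_div (by positivity) (by positivity)]
    ring_nf
  rw [hl]
  have hK1 : (R^2 - r₀^2)/K = 1 := by rw [← hK]; exact div_self hKpos.ne'
  linear_combination hK1

/-- Closed-form Laplace transform of the cumulative interference for path loss exponent
`α = 2` (equation (43) of the paper), under Rayleigh fading on the interfering links. -/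
theorem laplace_transform_interference_rayleigh_alpha_two
    {Ω : Type*} [MeasurableSpace Ω] (P : Measure Ω) [IsProbabilityMeasure P]
    (rE rmin rmax r₀ pi : ℝ) (hrE : 0 < rE) (hrmin : 0 < rmin) (hpi : 0 < pi)
    (hrmax : rmax = Real.sqrt (2 * rE * rmin + rmin ^ 2))
    (hr₀l : rmin ≤ r₀) (hr₀u : r₀ < rmax)
    (m : ℕ)
    (D : Fin m → Ω → ℝ) (G : Fin m → Ω → ℝ)
    (hDmeas : ∀ n, Measurable (D n)) (hGmeas : ∀ n, Measurable (G n))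
    (hDindep : iIndepFun D P)
    (hGindep : iIndepFun G P)
    (hDGindep : IndepFun (fun ω => fun n => D n ω) (fun ω => fun n => G n ω) P)
    (hDlaw : ∀ n, P.map (D n) =
      (volume : Measure ℝ).withDensity (fun r =>
        ENNReal.ofReal
          (if r₀ < r ∧ r ≤ 2 * rE + rmin then
            2 * r / ((2 * rE + rmin) ^ 2 - r₀ ^ 2) else 0)))
    (hGlaw : ∀ n, P.map (G n) = expMeasure 1)
    (I : Ω → ℝ)
    (hI : ∀ ω, I ω = ∑ n : Fin m,
      if D n ω ≤ rmax then pi * G n ω * (D n ω) ^ (-2 : ℝ) else 0)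
    (PI : ℝ) (hPI : PI = (rmax ^ 2 - r₀ ^ 2) / ((2 * rE + rmin) ^ 2 - r₀ ^ 2)) :
    ∀ s : ℝ, 0 < s →
      ∫ ω, Real.exp (-(s * I ω)) ∂P =
        ∑ k ∈ Finset.range (m + 1),
          (m.choose k : ℝ) * (1 - PI) ^ (m - k) *
            (PI * ((pi * s / (rmax ^ 2 - r₀ ^ 2)) *
              Real.log ((pi * s + r₀ ^ 2) / (pi * s + rmax ^ 2)) + 1)) ^ k := by
  intro s hs
  -- basic positivity facts
  set R : ℝ := 2 * rE + rmin with hR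
  set a : ℝ := pi * s with ha
  have hapos : 0 < a := mul_pos hpi hs
  have hr₀ : 0 < r₀ := lt_of_lt_of_le hrmin hr₀l
  have hrmax2 : rmax ^ 2 = 2 * rE * rmin + rmin ^ 2 := by
    rw [hrmax, sq_sqrt (by positivity)]
    -- 0 < 2*rE*rmin + rmin^2
  have hRpos : 0 < R := by rw [hR]; positivity
  have hrmaxR : rmax ≤ R := by
    nlinarith [hrmax2, sq_nonneg rE, sq_nonneg (R - rmax), hr₀u, hr₀]
  have hKpos : 0 < R ^ 2 - r₀ ^ 2 := by
    have : r₀ < R := lt_of_lt_of_le hr₀u hrmaxR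
    nlinarith
  have hkpos : 0 < rmax ^ 2 - r₀ ^ 2 := by nlinarith [hr₀u, hr₀]
  -- the target single-factor value
  set q : ℝ := 1 - a / (R ^ 2 - r₀ ^ 2) * Real.log ((a + rmax ^ 2) / (a + r₀ ^ 2)) with hq
  -- RHS equals q ^ m via the binomial theorem
  have hRHS : ∑ k ∈ Finset.range (m + 1),
      (m.choose k : ℝ) * (1 - PI) ^ (m - k) *
        (PI * ((pi * s / (rmax ^ 2 - r₀ ^ 2)) *
          Real.log ((pi * s + r₀ ^ 2) / (pi * s + rmax ^ 2)) + 1)) ^ k = q ^ m := by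
    have hfac : PI * ((pi * s / (rmax ^ 2 - r₀ ^ 2)) *
        Real.log ((pi * s + r₀ ^ 2) / (pi * s + rmax ^ 2)) + 1) + (1 - PI) = q := by
      have hlog : Real.log ((a + r₀ ^ 2) / (a + rmax ^ 2))
          = - Real.log ((a + rmax ^ 2) / (a + r₀ ^ 2)) := by
        rw [← Real.log_inv, inv_div]
      rw [hq, hPI, ← ha]
      rw [hlog]
      field_simp
      ring
    calc ∑ k ∈ Finset.range (m + 1),
        (m.choose k : ℝ) * (1 - PI) ^ (m - k) *
          (PI * ((pi * s / (rmax ^ 2 - r₀ ^ 2)) *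
            Real.log ((pi * s + r₀ ^ 2) / (pi * s + rmax ^ 2)) + 1)) ^ k
        = ∑ k ∈ Finset.range (m + 1),
          (PI * ((pi * s / (rmax ^ 2 - r₀ ^ 2)) *
            Real.log ((pi * s + r₀ ^ 2) / (pi * s + rmax ^ 2)) + 1)) ^ k
            * (1 - PI) ^ (m - k) * (m.choose k : ℝ) := by
          exact Finset.sum_congr rfl fun k _ => by ring
      _ = (PI * ((pi * s / (rmax ^ 2 - r₀ ^ 2)) *
            Real.log ((pi * s + r₀ ^ 2) / (pi * s + rmax ^ 2)) + 1) + (1 - PI)) ^ m :=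
          (add_pow _ _ m).symm
      _ = q ^ m := by rw [hfac]
  rw [hRHS]
  -- trivial case m = 0
  rcases Nat.eq_zero_or_pos m with hm | hm
  · subst hm
    have hone : ∀ ω, Real.exp (-(s * I ω)) = 1 := fun ω => by
      rw [hI ω]; simp
    simp only [hone, pow_zero, integral_const, probReal_univ, ENNReal.toReal_one, smul_eq_mul,
      mul_one]
  -- main case
  set μD : Measure ℝ := volume.withDensity (fun r =>
      ENNReal.ofReal (if r₀ < r ∧ r ≤ R then 2 * r / (R ^ 2 - r₀ ^ 2) else 0)) with hμD
  set μG : Measure ℝ := expMeasure 1 with hμG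
  haveI hPG : IsProbabilityMeasure μG := isProbabilityMeasure_expMeasure one_pos
  haveI hPD : IsProbabilityMeasure μD := by
    have := Measure.isProbabilityMeasure_map (μ := P) (f := D ⟨0, hm⟩) (hDmeas _).aemeasurable
    rwa [hDlaw ⟨0, hm⟩] at this
  -- marginal laws of the vectors
  have hDvecmeas : Measurable (fun ω => fun n => D n ω) := measurable_pi_lambda _ hDmeas
  have hGvecmeas : Measurable (fun ω => fun n => G n ω) := measurable_pi_lambda _ hGmeas
  have hmapD : P.map (fun ω => fun n => D n ω) = Measure.pi (fun _ => μD) := by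
    rw [aux_map_pi P D hDmeas hDindep]
    congr 1
    funext n
    exact hDlaw n
  have hmapG : P.map (fun ω => fun n => G n ω) = Measure.pi (fun _ => μG) := by
    rw [aux_map_pi P G hGmeas hGindep]
    congr 1
    funext n
    exact hGlaw n
  have hpair : P.map (fun ω => (fun n => D n ω, fun n => G n ω))
      = (Measure.pi (fun _ : Fin m => μD)).prod (Measure.pi (fun _ : Fin m => μG)) := by
    rw [(indepFun_iff_map_prod_eq_prod_map_map hDvecmeas.aemeasurable
      hGvecmeas.aemeasurable).mp hDGindep, hmapD, hmapG]
  -- the integrand as a function of the vectors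
  set F : (Fin m → ℝ) × (Fin m → ℝ) → ℝ := fun p =>
    ∏ n, (if p.1 n ≤ rmax then Real.exp (-(s * (pi * p.2 n * (p.1 n) ^ (-2:ℝ)))) else 1)
    with hF
  have hFmeas : Measurable F := by
    apply Finset.measurable_prod
    intro n _
    apply Measurable.ite
    · exact (measurable_pi_apply n).comp measurable_fst measurableSet_Iic
    · fun_prop
    · exact measurable_const
  have hstep1 : ∀ ω, Real.exp (-(s * I ω)) = F (fun n => D n ω, fun n => G n ω) := by
    intro ω
    rw [hI ω, Finset.mul_sum, ← Finset.sum_neg_distrib, Real.exp_sum]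
    refine Finset.prod_congr rfl fun n _ => ?_
    rw [apply_ite (fun z : ℝ => Real.exp (-(s * z)))]
    simp
  calc ∫ ω, Real.exp (-(s * I ω)) ∂P
      = ∫ ω, F (fun n => D n ω, fun n => G n ω) ∂P := by simp_rw [hstep1]
    _ = ∫ p, F p ∂(P.map (fun ω => (fun n => D n ω, fun n => G n ω))) :=
        (integral_map (hDvecmeas.prodMk hGvecmeas).aemeasurable
          hFmeas.aestronglyMeasurable).symm
    _ = ∫ p, F p ∂((Measure.pi (fun _ : Fin m => μD)).prod (Measure.pi (fun _ : Fin m => μG))) := by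
        rw [hpair]
    _ = q ^ m := ?_
  -- the bounded a.e.-equal version of the integrand
  set Ft : (Fin m → ℝ) × (Fin m → ℝ) → ℝ := fun p =>
    ∏ n, (if p.1 n ≤ rmax then
      Real.exp (-(a * (max (p.1 n) r₀) ^ (-2:ℝ) * max (p.2 n) 0)) else 1) with hFt
  have hFtmeas : Measurable Ft := by
    apply Finset.measurable_prod
    intro n _
    apply Measurable.ite
    · exact (measurable_pi_apply n).comp measurable_fst measurableSet_Iic
    · fun_prop
    · exact measurable_const
  -- almost sure localization to the support of the laws
  have hμDIoc : μD ((Set.Ioc r₀ R)ᶜ) = 0 := by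
    rw [hμD, withDensity_apply _ (measurableSet_Ioc.compl)]
    rw [setLIntegral_congr_fun measurableSet_Ioc.compl (
      (fun x hx => by
        rw [if_neg (by simpa [Set.mem_Ioc] using hx), ENNReal.ofReal_zero]))]
    simp
  have hμGIci : μG ((Set.Ici (0:ℝ))ᶜ) = 0 := by
    have : μG = volume.withDensity (exponentialPDF 1) := rfl
    rw [this, compl_Ici, withDensity_apply _ measurableSet_Iio]
    exact lintegral_exponentialPDF_of_nonpos le_rfl
  have hgood : ∀ᵐ p ∂((Measure.pi (fun _ : Fin m => μD)).prod (Measure.pi (fun _ : Fin m => μG))),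
      p ∈ (Set.univ.pi fun _ : Fin m => Set.Ioc r₀ R) ×ˢ
        (Set.univ.pi fun _ : Fin m => Set.Ici (0:ℝ)) := by
    have hSm : MeasurableSet ((Set.univ.pi fun _ : Fin m => Set.Ioc r₀ R) ×ˢ
        (Set.univ.pi fun _ : Fin m => Set.Ici (0:ℝ))) :=
      (MeasurableSet.univ_pi fun _ => measurableSet_Ioc).prod
        (MeasurableSet.univ_pi fun _ => measurableSet_Ici)
    have hS1 : ((Measure.pi (fun _ : Fin m => μD)).prod (Measure.pi (fun _ : Fin m => μG)))
        ((Set.univ.pi fun _ : Fin m => Set.Ioc r₀ R) ×ˢ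
          (Set.univ.pi fun _ : Fin m => Set.Ici (0:ℝ))) = 1 := by
      rw [Measure.prod_prod, Measure.pi_pi, Measure.pi_pi]
      have h1 : μD (Set.Ioc r₀ R) = 1 := by
        have h := measure_add_measure_compl (μ := μD) (s := Set.Ioc r₀ R) measurableSet_Ioc
        rwa [hμDIoc, add_zero, measure_univ] at h
      have h2 : μG (Set.Ici (0:ℝ)) = 1 := by
        have h := measure_add_measure_compl (μ := μG) (s := Set.Ici (0:ℝ)) measurableSet_Ici
        rwa [hμGIci, add_zero, measure_univ] at h
      simp [h1, h2]
    have := measure_compl (μ := (Measure.pi (fun _ : Fin m => μD)).prod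
      (Measure.pi (fun _ : Fin m => μG))) hSm (measure_ne_top _ _)
    rw [measure_univ, hS1, tsub_self] at this
    exact ae_iff.2 this
  -- F and Ft agree almost everywhere
  have hae : F =ᵐ[(Measure.pi (fun _ : Fin m => μD)).prod (Measure.pi (fun _ : Fin m => μG))] Ft := by
    refine hgood.mono fun p hp => ?_
    obtain ⟨hp1, hp2⟩ := Set.mem_prod.mp hp
    refine Finset.prod_congr rfl fun n _ => ?_
    have hd := hp1 n (Set.mem_univ n)
    have hg := hp2 n (Set.mem_univ n)
    rw [max_eq_left hd.1.le, max_eq_left hg]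
    split_ifs with hcond
    · exact congrArg Real.exp (by rw [ha]; ring)
    · rfl
  -- boundedness and integrability of Ft
  have hFtbd : ∀ p : (Fin m → ℝ) × (Fin m → ℝ), ‖Ft p‖ ≤ 1 := by
    intro p
    rw [Real.norm_eq_abs, Finset.abs_prod]
    refine Finset.prod_le_one (fun n _ => abs_nonneg _) fun n _ => ?_
    rw [abs_of_nonneg]
    · split_ifs with hcond
      · refine Real.exp_le_one_iff.mpr ?_
        have h1 : (0:ℝ) ≤ (max (p.1 n) r₀) ^ (-2:ℝ) :=
          Real.rpow_nonneg (le_trans hr₀.le (le_max_right _ _)) _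
        have h2 : (0:ℝ) ≤ max (p.2 n) 0 := le_max_right _ _
        have : 0 ≤ a * (max (p.1 n) r₀) ^ (-2:ℝ) * max (p.2 n) 0 := by positivity
        linarith
      · exact le_rfl
    · split_ifs with hcond
      · exact (Real.exp_pos _).le
      · exact zero_le_one
  have hFtint : Integrable Ft
      ((Measure.pi (fun _ : Fin m => μD)).prod (Measure.pi (fun _ : Fin m => μG))) :=
    (integrable_const (1:ℝ)).mono' hFtmeas.aestronglyMeasurable
      (Filter.Eventually.of_forall hFtbd)
  rw [integral_congr_ae hae, MeasureTheory.integral_prod _ hFtint]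
  -- the per-coordinate distance-conditional factor
  set ht : ℝ → ℝ := fun x => if x ≤ rmax then 1 / (1 + a * (max x r₀) ^ (-2:ℝ)) else 1 with hht
  have hinner : ∀ d : Fin m → ℝ,
      (∫ g : Fin m → ℝ, Ft (d, g) ∂Measure.pi (fun _ : Fin m => μG)) = ∏ n, ht (d n) := by
    intro d
    have key := aux_integral_pi_prod (m := m) μG (fun n y => if d n ≤ rmax then
      Real.exp (-(a * (max (d n) r₀) ^ (-2:ℝ) * max y 0)) else 1)
    simp only [hFt]
    rw [key]
    refine Finset.prod_congr rfl fun n _ => ?_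
    by_cases hcond : d n ≤ rmax
    · simp only [hht, if_pos hcond]
      exact aux_exp_integral (by positivity)
    · simp only [hht, if_neg hcond]
      simp only [integral_const, probReal_univ, ENNReal.toReal_one, smul_eq_mul, one_mul, mul_one]
  simp_rw [hinner]
  have key2 := aux_integral_pi_prod (m := m) μD (fun _ => ht)
  rw [key2, Finset.prod_const, Finset.card_univ, Fintype.card_fin]
  have hval : ∫ x, ht x ∂μD = q := by
    rw [hht, hμD, hq]
    exact aux_D_integral hr₀ hr₀u hrmaxR hapos
  rw [hval]
end
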